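/- arXiv:math/0606122 — 5 statements merged into one kernel-verified Lean document; each statement's English description precedes it below -/
import Mathlib

section
/- In 4-move peg solitaire on ℤ², the six parities n_0+n_1, n_1+n_2, n_0+n_2 (for the labeling (x+y) mod 3) together with the three analogous sums for the labeling (x−y) mod 3 are all invariant under legal jumps; hence board positions reachable from one another must lie in the same one of at most 16 position classes determined by these parities. -/
open Finset

abbrev Cell := ℤ × ℤ
abbrev Pos := Finset Cell

/-- The four orthogonal jump directions (4-move solitaire). -/
def dirs4 : Finset Cell := {(1,0),(-1,0),(0,1),(0,-1)}

/-- The eight jump directions (8-move solitaire). -/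
def dirs8 : Finset Cell :=
  {(1,0),(-1,0),(0,1),(0,-1),(1,1),(1,-1),(-1,1),(-1,-1)}

/-- A legal jump on `board` with allowed directions `dirs`, taking position `B` to `B'`:
the peg at `p` jumps over the peg at `p + d` into the empty hole `p + d + d`,
removing the jumped peg. -/
def IsJump (board dirs : Finset Cell) (B B' : Pos) (p d : Cell) : Prop :=
  d ∈ dirs ∧ p ∈ B ∧ p + d ∈ B ∧ p + d + d ∈ board ∧ p + d + d ∉ B ∧
    B' = insert (p + d + d) ((B.erase p).erase (p + d))

/-- A move: one or more consecutive jumps by the same peg, starting at `p` and ending at `q`. -/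
inductive Move (board dirs : Finset Cell) : Pos → Pos → Cell → Cell → Prop
  | single {B B' : Pos} {p d : Cell} (h : IsJump board dirs B B' p d) :
      Move board dirs B B' p (p + d + d)
  | cons {B B' B'' : Pos} {p d q : Cell} (h : IsJump board dirs B B' p d)
      (hm : Move board dirs B' B'' (p + d + d) q) : Move board dirs B B'' p q

/-- A sequence of moves, recorded as a list of (start hole, end hole) pairs. -/
inductive MoveSeq (board dirs : Finset Cell) : Pos → Pos → List (Cell × Cell) → Prop
  | nil (B : Pos) : MoveSeq board dirs B B []
  | cons {B B' B'' : Pos} {p q : Cell} {l : List (Cell × Cell)}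
      (h : Move board dirs B B' p q) (hs : MoveSeq board dirs B' B'' l) :
      MoveSeq board dirs B B'' ((p, q) :: l)

/-- The diamond board of "radius" r : all integer points with |x|+|y| ≤ r. -/
noncomputable def diamondB (r : ℤ) : Finset Cell :=
  ((Finset.Icc (-r) r) ×ˢ (Finset.Icc (-r) r)).filter (fun p => |p.1| + |p.2| ≤ r)

/-- The standard 33-hole cross-shaped board. -/
noncomputable def board33 : Finset Cell :=
  ((Finset.Icc (-3 : ℤ) 3) ×ˢ (Finset.Icc (-3 : ℤ) 3)).filter
    (fun p => |p.1| ≤ 1 ∨ |p.2| ≤ 1)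

/-- The 37-hole board (7×7 square minus three holes at each corner). -/
noncomputable def board37 : Finset Cell :=
  ((Finset.Icc (-3 : ℤ) 3) ×ˢ (Finset.Icc (-3 : ℤ) 3)).filter
    (fun p => |p.1| ≤ 1 ∨ |p.2| ≤ 1 ∨ (|p.1| ≤ 2 ∧ |p.2| ≤ 2))

/-- The central 3×3 block of nine holes. -/
noncomputable def C9 : Finset Cell := (Finset.Icc (-1 : ℤ) 1) ×ˢ (Finset.Icc (-1 : ℤ) 1)

/-- Number of pegs of `B` labeled `i` under the labeling `(x+y) mod 3`. -/
def cnt₁ (B : Pos) (i : ZMod 3) : ℕ :=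
  (B.filter (fun p => ((p.1 + p.2 : ℤ) : ZMod 3) = i)).card

/-- Number of pegs of `B` labeled `i` under the labeling `(x−y) mod 3`. -/
def cnt₂ (B : Pos) (i : ZMod 3) : ℕ :=
  (B.filter (fun p => ((p.1 - p.2 : ℤ) : ZMod 3) = i)).card

/-- The six invariant parities `n₀+n₁, n₁+n₂, n₀+n₂` for the two diagonal labelings. -/
def classOf (B : Pos) :
    (ZMod 2 × ZMod 2 × ZMod 2) × (ZMod 2 × ZMod 2 × ZMod 2) :=
  ((((cnt₁ B 0 + cnt₁ B 1 : ℕ) : ZMod 2), ((cnt₁ B 1 + cnt₁ B 2 : ℕ) : ZMod 2),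
      ((cnt₁ B 0 + cnt₁ B 2 : ℕ) : ZMod 2)),
    (((cnt₂ B 0 + cnt₂ B 1 : ℕ) : ZMod 2), ((cnt₂ B 1 + cnt₂ B 2 : ℕ) : ZMod 2),
      ((cnt₂ B 0 + cnt₂ B 2 : ℕ) : ZMod 2)))

/-- Reachability by a (possibly empty) sequence of legal 4-move jumps. -/
def Reach4 (board : Finset Cell) : Pos → Pos → Prop :=
  Relation.ReflTransGen (fun B B' => ∃ p d, IsJump board dirs4 B B' p d)


section AuxInvariant

private lemma aux_erase {pred : Cell → Prop} [DecidablePred pred] {T : Finset Cell} {x : Cell}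
    (hx : x ∈ T) :
    ((T.erase x).filter pred).card + (if pred x then 1 else 0) = (T.filter pred).card := by
  rw [Finset.filter_erase]
  by_cases h : pred x
  · rw [if_pos h, Finset.card_erase_of_mem (Finset.mem_filter.2 ⟨hx, h⟩)]
    have : 1 ≤ (T.filter pred).card :=
      Finset.card_pos.2 ⟨x, Finset.mem_filter.2 ⟨hx, h⟩⟩
    omega
  · rw [if_neg h, Finset.erase_eq_of_notMem (by simp [h]), add_zero]

private lemma aux_insert {pred : Cell → Prop} [DecidablePred pred] {T : Finset Cell} {x : Cell}
    (hx : x ∉ T) :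
    ((insert x T).filter pred).card = (T.filter pred).card + (if pred x then 1 else 0) := by
  rw [Finset.filter_insert]
  by_cases h : pred x
  · rw [if_pos h, if_pos h, Finset.card_insert_of_notMem (by simp [hx])]
  · simp [h]

/-- Natural-number bookkeeping for one jump, for an arbitrary `ZMod 3`-labeling `L`. -/
private lemma jump_cnt (L : Cell → ZMod 3) {B B' : Pos} {p d : Cell}
    (hp : p ∈ B) (hpd : p + d ∈ B) (hq : p + d + d ∉ B)
    (hB' : B' = insert (p + d + d) ((B.erase p).erase (p + d)))
    (hne : p ≠ p + d) (i : ZMod 3) :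
    (B'.filter (fun x => L x = i)).card
        + (if L (p + d) = i then 1 else 0) + (if L p = i then 1 else 0)
      = (B.filter (fun x => L x = i)).card + (if L (p + d + d) = i then 1 else 0) := by
  have hqS : p + d + d ∉ (B.erase p).erase (p + d) := fun h => hq (Finset.mem_of_mem_erase (Finset.mem_of_mem_erase h))
  have h1 : (B'.filter (fun x => L x = i)).card
      = (((B.erase p).erase (p + d)).filter (fun x => L x = i)).card
        + (if L (p + d + d) = i then 1 else 0) := by
    rw [hB']; exact aux_insert hqS
  have h2 : ((((B.erase p).erase (p + d)).filter (fun x => L x = i)).card)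
        + (if L (p + d) = i then 1 else 0)
      = ((B.erase p).filter (fun x => L x = i)).card :=
    aux_erase (Finset.mem_erase.2 ⟨fun h => hne h.symm, hpd⟩)
  have h3 : ((B.erase p).filter (fun x => L x = i)).card + (if L p = i then 1 else 0)
      = (B.filter (fun x => L x = i)).card := aux_erase hp
  omega

private lemma z2 : ∀ A B C D x1 x2 x3 y1 y2 y3 : ZMod 2,
    A + x1 + x2 = B + x3 → C + y1 + y2 = D + y3 →
    x1 + y1 + x2 + y2 + x3 + y3 = 0 → A + C = B + D := by decide

private lemma key3 : ∀ (i j a e : ZMod 3), i ≠ j → (e = 1 ∨ e = 2) →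
    ((if a = i then (1 : ZMod 2) else 0) + (if a = j then 1 else 0))
      + ((if a + e = i then (1 : ZMod 2) else 0) + (if a + e = j then 1 else 0))
      + ((if a + e + e = i then (1 : ZMod 2) else 0) + (if a + e + e = j then 1 else 0))
      = 0 := by decide

/-- Parity of the pair-count `n_i + n_j` is invariant under one jump, for a labeling that
changes by `e ∈ {1,2}` along the jump direction. -/
private lemma pair_invariant (L : Cell → ZMod 3) {e : ZMod 3} (he : e = 1 ∨ e = 2)
    {B B' : Pos} {p d : Cell}
    (hLd : ∀ x : Cell, L (x + d) = L x + e)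
    (hp : p ∈ B) (hpd : p + d ∈ B) (hq : p + d + d ∉ B)
    (hB' : B' = insert (p + d + d) ((B.erase p).erase (p + d)))
    (hne : p ≠ p + d) {i j : ZMod 3} (hij : i ≠ j) :
    (((B'.filter (fun x => L x = i)).card + (B'.filter (fun x => L x = j)).card : ℕ) : ZMod 2)
      = (((B.filter (fun x => L x = i)).card + (B.filter (fun x => L x = j)).card : ℕ) : ZMod 2) := by
  have hi := congrArg (fun n : ℕ => (n : ZMod 2)) (jump_cnt L hp hpd hq hB' hne i)
  have hj := congrArg (fun n : ℕ => (n : ZMod 2)) (jump_cnt L hp hpd hq hB' hne j)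
  push_cast at hi hj ⊢
  have hk := key3 i j (L p) e hij he
  rw [← hLd p, ← hLd (p + d)] at hk
  refine z2 _ _ _ _ _ _ _ _ _ _ hi hj ?_
  · linear_combination hk

/-- The class is invariant under a single legal 4-move jump. -/
private lemma classOf_jump {board : Finset Cell} {B B' : Pos} {p d : Cell}
    (h : IsJump board dirs4 B B' p d) : classOf B = classOf B' := by
  obtain ⟨hd, hp, hpd, _, hq, hB'⟩ := h
  have hd' : d = (1, 0) ∨ d = (-1, 0) ∨ d = (0, 1) ∨ d = (0, -1) := by
    simpa [dirs4] using hd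
  set L₁ : Cell → ZMod 3 := fun x => ((x.1 + x.2 : ℤ) : ZMod 3) with hL₁
  set L₂ : Cell → ZMod 3 := fun x => ((x.1 - x.2 : ℤ) : ZMod 3) with hL₂
  set e₁ : ZMod 3 := ((d.1 + d.2 : ℤ) : ZMod 3) with he₁def
  set e₂ : ZMod 3 := ((d.1 - d.2 : ℤ) : ZMod 3) with he₂def
  have he₁ : e₁ = 1 ∨ e₁ = 2 := by
    rcases hd' with rfl | rfl | rfl | rfl <;> simp [he₁def] <;> decide
  have he₂ : e₂ = 1 ∨ e₂ = 2 := by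
    rcases hd' with rfl | rfl | rfl | rfl <;> simp [he₂def] <;> decide
  have hne : p ≠ p + d := by
    have hd0 : d ≠ 0 := by rcases hd' with rfl | rfl | rfl | rfl <;> decide
    intro h; exact hd0 (by simpa using h.symm)
  have hLd₁ : ∀ x : Cell, L₁ (x + d) = L₁ x + e₁ := by
    intro x; simp only [hL₁, he₁def, Prod.fst_add, Prod.snd_add]; push_cast; ring
  have hLd₂ : ∀ x : Cell, L₂ (x + d) = L₂ x + e₂ := by
    intro x; simp only [hL₂, he₂def, Prod.fst_add, Prod.snd_add]; push_cast; ring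
  have P₁ : ∀ i j : ZMod 3, i ≠ j →
      ((cnt₁ B i + cnt₁ B j : ℕ) : ZMod 2) = ((cnt₁ B' i + cnt₁ B' j : ℕ) : ZMod 2) := by
    intro i j hij
    exact (pair_invariant L₁ he₁ hLd₁ hp hpd hq hB' hne hij).symm
  have P₂ : ∀ i j : ZMod 3, i ≠ j →
      ((cnt₂ B i + cnt₂ B j : ℕ) : ZMod 2) = ((cnt₂ B' i + cnt₂ B' j : ℕ) : ZMod 2) := by
    intro i j hij
    exact (pair_invariant L₂ he₂ hLd₂ hp hpd hq hB' hne hij).symm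
  simp only [classOf, Prod.mk.injEq]
  exact ⟨⟨P₁ 0 1 (by decide), P₁ 1 2 (by decide), P₁ 0 2 (by decide)⟩,
    P₂ 0 1 (by decide), P₂ 1 2 (by decide), P₂ 0 2 (by decide)⟩

private lemma z2' : ∀ a b c : ZMod 2, a + c = (a + b) + (b + c) := by decide

end AuxInvariant

/-- the six parities are invariant under legal 4-move jumps, hence positions
reachable from one another lie in the same of at most 16 position classes. -/
theorem stmt_1 (board : Finset Cell) :
    (∀ B B' : Pos, Reach4 board B B' → classOf B = classOf B') ∧
      Set.ncard (Set.range classOf) ≤ 16 := by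
  constructor
  · intro B B' h
    induction h with
    | refl => rfl
    | tail _ hstep ih =>
        obtain ⟨p, d, hj⟩ := hstep
        exact ih.trans (classOf_jump hj)
  · set g : (ZMod 2 × ZMod 2) × (ZMod 2 × ZMod 2) →
        (ZMod 2 × ZMod 2 × ZMod 2) × (ZMod 2 × ZMod 2 × ZMod 2) :=
      fun z => ((z.1.1, z.1.2, z.1.1 + z.1.2), (z.2.1, z.2.2, z.2.1 + z.2.2)) with hg
    have hsub : Set.range classOf ⊆ Set.range g := by
      rintro _ ⟨B, rfl⟩
      refine ⟨((((cnt₁ B 0 + cnt₁ B 1 : ℕ) : ZMod 2), ((cnt₁ B 1 + cnt₁ B 2 : ℕ) : ZMod 2)),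
        (((cnt₂ B 0 + cnt₂ B 1 : ℕ) : ZMod 2), ((cnt₂ B 1 + cnt₂ B 2 : ℕ) : ZMod 2))), ?_⟩
      simp only [hg, classOf, Prod.mk.injEq, eq_self_iff_true, true_and, and_true]
      constructor <;> · push_cast; exact (z2' _ _ _).symm
    calc Set.ncard (Set.range classOf) ≤ Set.ncard (Set.range g) :=
          Set.ncard_le_ncard hsub (Set.finite_range g)
      _ = (g '' Set.univ).ncard := by rw [Set.image_univ]
      _ ≤ Set.univ.ncard := Set.ncard_image_le Set.finite_univ
      _ = 16 := by rw [Set.ncard_univ]; simp [Nat.card_eq_fintype_card]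
end

section
/- On the 37-hole board under 8-move solitaire, the C9 complement problem (start with only the central 3×3 block of 9 holes empty and all other 28 holes full; finish with pegs exactly on the central 9 holes) cannot be solved in fewer than 13 moves, and in any 13-move solution every move must start outside the central 9 holes and end inside them. -/
open Finset

lemma pdd_ne {p d : Cell} (hd : d ∈ dirs8) : p + d + d ≠ p := by
  have hdd : d + d ≠ 0 := by fin_cases hd <;> decide
  rw [add_assoc]
  intro h
  exact hdd (add_eq_left.mp h)

lemma move_start_mem {B B' : Pos} {p q : Cell} (h : Move board37 dirs8 B B' p q) : p ∈ B := by
  cases h with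
  | single h => exact h.2.1
  | cons h hm => exact h.2.1

lemma move_end_mem {B B' : Pos} {p q : Cell} (h : Move board37 dirs8 B B' p q) : q ∈ B' := by
  induction h with
  | single h => rw [h.2.2.2.2.2]; exact Finset.mem_insert_self _ _
  | cons h hm ih => exact ih

lemma move_end_board {B B' : Pos} {p q : Cell} (h : Move board37 dirs8 B B' p q) :
    q ∈ board37 := by
  induction h with
  | single h => exact h.2.2.2.1
  | cons h hm ih => exact ih

lemma move_parity {B B' : Pos} {p q : Cell} (h : Move board37 dirs8 B B' p q) :
    (q.1 - p.1) % 2 = 0 ∧ (q.2 - p.2) % 2 = 0 := by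
  induction h with
  | @single B B' p d h =>
      constructor <;> simp [Prod.fst_add, Prod.snd_add] <;> omega
  | @cons B B' B'' p d q h hm ih =>
      obtain ⟨i1, i2⟩ := ih
      simp only [Prod.fst_add, Prod.snd_add] at i1 i2
      constructor <;> omega

lemma jump_subset {B B' : Pos} {p d : Cell} (hj : IsJump board37 dirs8 B B' p d)
    (hb : B ⊆ board37) : B' ⊆ board37 := by
  rw [hj.2.2.2.2.2]
  exact Finset.insert_subset hj.2.2.2.1
    (((Finset.erase_subset _ _).trans (Finset.erase_subset _ _)).trans hb)

lemma move_subset {B B' : Pos} {p q : Cell} (h : Move board37 dirs8 B B' p q) :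
    B ⊆ board37 → B' ⊆ board37 := by
  induction h with
  | single hj => exact fun hb => jump_subset hj hb
  | cons hj hm ih => exact fun hb => ih (jump_subset hj hb)

lemma move_vacate {B B' : Pos} {p q : Cell} (h : Move board37 dirs8 B B' p q) :
    ∀ c : Cell, c ≠ q → (c ∉ B ∨ c = p) → c ∉ B' := by
  induction h with
  | @single B B' p d hj =>
      intro c hcq hc
      rw [hj.2.2.2.2.2]
      simp only [Finset.mem_insert, Finset.mem_erase]
      rintro (rfl | ⟨h1, h2, h3⟩)
      · exact hcq rfl
      · rcases hc with h | rfl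
        · exact h h3
        · exact h2 rfl
  | @cons B B' B'' p d q hj hm ih =>
      intro c hcq hc
      apply ih c hcq
      rcases hc with hc | rfl
      · by_cases hce : c = p + d + d
        · exact Or.inr hce
        · refine Or.inl ?_
          rw [hj.2.2.2.2.2]
          simp only [Finset.mem_insert, Finset.mem_erase]
          rintro (h | ⟨_, _, h3⟩)
          · exact hce h
          · exact hc h3
      · refine Or.inl ?_
        rw [hj.2.2.2.2.2]
        simp only [Finset.mem_insert, Finset.mem_erase]
        rintro (h | ⟨h1, h2, _⟩)
        · exact pdd_ne hj.1 h.symm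
        · exact h2 rfl

lemma move_stay {c : Cell}
    (hc : ∀ d ∈ dirs8, ¬(c - d ∈ board37 ∧ c + d ∈ board37))
    {B B' : Pos} {p q : Cell} (h : Move board37 dirs8 B B' p q) :
    B ⊆ board37 → c ∈ B → c ≠ p → c ∈ B' ∧ c ≠ q := by
  induction h with
  | @single B B' p d hj =>
      intro hb hcB hcp
      have hcd : c ≠ p + d := by
        rintro rfl
        refine hc d hj.1 ⟨?_, hj.2.2.2.1⟩
        simpa using hb hj.2.1
      have hcq : c ≠ p + d + d := fun h => hj.2.2.2.2.1 (h ▸ hcB)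
      refine ⟨?_, hcq⟩
      rw [hj.2.2.2.2.2]
      exact Finset.mem_insert_of_mem (Finset.mem_erase.mpr ⟨hcd, Finset.mem_erase.mpr ⟨hcp, hcB⟩⟩)
  | @cons B B' B'' p d q hj hm ih =>
      intro hb hcB hcp
      have hcd : c ≠ p + d := by
        rintro rfl
        refine hc d hj.1 ⟨?_, hj.2.2.2.1⟩
        simpa using hb hj.2.1
      have hcdd : c ≠ p + d + d := fun h => hj.2.2.2.2.1 (h ▸ hcB)
      have hcB' : c ∈ B' := by
        rw [hj.2.2.2.2.2]
        exact Finset.mem_insert_of_mem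
          (Finset.mem_erase.mpr ⟨hcd, Finset.mem_erase.mpr ⟨hcp, hcB⟩⟩)
      exact ih (jump_subset hj hb) hcB' hcdd


lemma move_count_le (h0 : Cell) {B B' : Pos} {p q : Cell}
    (hm : Move board37 dirs8 B B' p q) :
    (if h0 ∈ B' then (1:ℤ) else 0) - (if h0 ∈ B then 1 else 0)
      ≤ (if q = h0 then 1 else 0) - (if p = h0 then 1 else 0) := by
  have h1 := move_start_mem hm
  have h2 := move_end_mem hm
  have h3 := move_vacate hm h0
  by_cases hq : q = h0
  · by_cases hp : p = h0
    · subst hq; subst hp; simp [h1, h2]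
    · simp only [if_pos hq, if_neg hp]
      split_ifs <;> omega
  · by_cases hp : p = h0
    · have hnB' : h0 ∉ B' := h3 (fun e => hq e.symm) (Or.inr hp.symm)
      subst hp
      simp [hq, hnB', h1]
    · simp only [if_neg hq, if_neg hp]
      by_cases hB' : h0 ∈ B'
      · have hB : h0 ∈ B := by
          by_contra hB
          exact h3 (fun e => hq e.symm) (Or.inl hB) hB'
        simp [hB, hB']
      · simp [hB']
        split_ifs <;> omega

lemma move_count_ge {c : Cell}
    (hc : ∀ d ∈ dirs8, ¬(c - d ∈ board37 ∧ c + d ∈ board37))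
    {B B' : Pos} {p q : Cell} (hm : Move board37 dirs8 B B' p q) (hb : B ⊆ board37) :
    (if q = c then (1:ℤ) else 0) - (if p = c then 1 else 0)
      ≤ (if c ∈ B' then 1 else 0) - (if c ∈ B then 1 else 0) := by
  have h1 := move_start_mem hm
  have h2 := move_end_mem hm
  by_cases hp : p = c
  · subst hp
    simp only [if_pos rfl, if_pos h1]
    by_cases hq : q = p
    · subst hq; simp [h2]
    · split_ifs <;> omega
  · by_cases hcB : c ∈ B
    · obtain ⟨hB', hq⟩ := move_stay hc hm hb hcB (fun e => hp e.symm)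
      have hq' : ¬ q = c := fun e => hq e.symm
      simp [hB', hcB, hp, hq']
    · simp only [if_neg hp, if_neg hcB]
      by_cases hq : q = c
      · subst hq; simp [h2]
      · split_ifs <;> omega

lemma seq_count_le (h0 : Cell) {B B'' : Pos} {l : List (Cell × Cell)}
    (hs : MoveSeq board37 dirs8 B B'' l) :
    (if h0 ∈ B'' then (1:ℤ) else 0) - (if h0 ∈ B then 1 else 0)
      ≤ (l.countP (fun pq => decide (pq.2 = h0)) : ℤ)
        - (l.countP (fun pq => decide (pq.1 = h0)) : ℤ) := by
  induction hs with
  | nil B => simp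
  | @cons B B' B'' p q l h hs ih =>
      have h1 := move_count_le h0 h
      simp only [List.countP_cons, decide_eq_true_eq]
      push_cast
      split_ifs at h1 ih ⊢ <;> omega

lemma seq_count_ge {c : Cell}
    (hc : ∀ d ∈ dirs8, ¬(c - d ∈ board37 ∧ c + d ∈ board37))
    {B B'' : Pos} {l : List (Cell × Cell)}
    (hs : MoveSeq board37 dirs8 B B'' l) :
    B ⊆ board37 →
    (l.countP (fun pq => decide (pq.2 = c)) : ℤ)
        - (l.countP (fun pq => decide (pq.1 = c)) : ℤ)
      ≤ (if c ∈ B'' then (1:ℤ) else 0) - (if c ∈ B then 1 else 0) := by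
  induction hs with
  | nil B => intro _; simp
  | @cons B B' B'' p q l h hs ih =>
      intro hb
      have h1 := move_count_ge hc h hb
      have ih' := ih (move_subset h hb)
      simp only [List.countP_cons, decide_eq_true_eq]
      push_cast
      split_ifs at h1 ih' ⊢ <;> omega

lemma seq_elts {B B'' : Pos} {l : List (Cell × Cell)}
    (hs : MoveSeq board37 dirs8 B B'' l) :
    ∀ pq ∈ l, ((pq.2.1 - pq.1.1) % 2 = 0 ∧ (pq.2.2 - pq.1.2) % 2 = 0) ∧ pq.2 ∈ board37 := by
  induction hs with
  | nil B => simp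
  | @cons B B' B'' p q l h hs ih =>
      intro pq hpq
      rcases List.mem_cons.1 hpq with rfl | h'
      · exact ⟨move_parity h, move_end_board h⟩
      · exact ih pq h'

lemma countP_eq_sum (s : Finset Cell) (f : Cell × Cell → Cell) (l : List (Cell × Cell)) :
    l.countP (fun pq => decide (f pq ∈ s)) = ∑ c ∈ s, l.countP (fun pq => decide (f pq = c)) := by
  induction l with
  | nil => simp
  | cons a l ih =>
      simp only [List.countP_cons, ih, Finset.sum_add_distrib, decide_eq_true_eq]
      congr 1
      rw [Finset.sum_ite_eq s (f a) (fun _ => 1)]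

lemma countP_or_disj {A B : Cell × Cell → Prop} [DecidablePred A] [DecidablePred B]
    (l : List (Cell × Cell)) (h : ∀ x ∈ l, ¬(A x ∧ B x)) :
    l.countP (fun x => decide (A x)) + l.countP (fun x => decide (B x))
      = l.countP (fun x => decide (A x ∨ B x)) := by
  induction l with
  | nil => simp
  | cons a l ih =>
      simp only [List.countP_cons, decide_eq_true_eq]
      rw [← ih (fun x hx => h x (List.mem_cons_of_mem a hx))]
      have ha := h a (List.mem_cons_self (a := a) (l := l))
      by_cases hA : A a <;> by_cases hB : B a
      · exact absurd ⟨hA, hB⟩ ha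
      all_goals simp [hA, hB]
      all_goals omega

def cornersK : Finset Cell := {(3,1),(3,-1),(-3,1),(-3,-1),(1,3),(1,-3),(-1,3),(-1,-3)}
def plus5 : Finset Cell := {(0,0),(1,0),(-1,0),(0,1),(0,-1)}

lemma key (l : List (Cell × Cell)) (hs : MoveSeq board37 dirs8 (board37 \ C9) C9 l) :
    13 ≤ l.length ∧ (l.length = 13 → ∀ pq ∈ l, pq.1 ∉ C9 ∧ pq.2 ∈ C9) := by
  have hb0 : board37 \ C9 ⊆ board37 := Finset.sdiff_subset
  have hKfacts : ∀ c ∈ cornersK,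
      (∀ d ∈ dirs8, ¬(c - d ∈ board37 ∧ c + d ∈ board37)) ∧ c ∉ C9 ∧ c ∈ board37 \ C9 := by
    decide
  have hKodd : ∀ x ∈ cornersK, x.1 % 2 = 1 ∧ x.2 % 2 = 1 := by decide
  have hPeven : ∀ x ∈ plus5, x.1 % 2 = 0 ∨ x.2 % 2 = 0 := by decide
  have hK : ∀ c ∈ cornersK,
      l.countP (fun pq => decide (pq.2 = c)) + 1 ≤ l.countP (fun pq => decide (pq.1 = c)) := by
    intro c hcK
    obtain ⟨hc, h2, h3⟩ := hKfacts c hcK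
    have h1 := seq_count_ge hc hs hb0
    rw [if_neg h2, if_pos h3] at h1
    omega
  have hP : ∀ c ∈ plus5,
      l.countP (fun pq => decide (pq.1 = c)) + 1 ≤ l.countP (fun pq => decide (pq.2 = c)) := by
    intro c hcP
    have h2 : c ∈ C9 := by fin_cases hcP <;> decide
    have h3 : c ∉ board37 \ C9 := by fin_cases hcP <;> decide
    have h1 := seq_count_le c hs
    rw [if_pos h2, if_neg h3] at h1
    omega
  have helts := seq_elts hs
  have hdisj : ∀ pq ∈ l, ¬((pq.1 ∈ cornersK) ∧ (pq.2 ∈ plus5)) := by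
    rintro pq hpq ⟨h1, h2⟩
    obtain ⟨⟨e1, e2⟩, _⟩ := helts pq hpq
    obtain ⟨o1, o2⟩ := hKodd _ h1
    rcases hPeven _ h2 with o3 | o3 <;> omega
  have hor : l.countP (fun pq => decide (pq.1 ∈ cornersK))
        + l.countP (fun pq => decide (pq.2 ∈ plus5))
      = l.countP (fun pq => decide (pq.1 ∈ cornersK ∨ pq.2 ∈ plus5)) :=
    countP_or_disj (A := fun pq => pq.1 ∈ cornersK) (B := fun pq => pq.2 ∈ plus5) l hdisj
  have hSKsum : l.countP (fun pq => decide (pq.1 ∈ cornersK))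
      = ∑ c ∈ cornersK, l.countP (fun pq => decide (pq.1 = c)) := countP_eq_sum cornersK Prod.fst l
  have hEPsum : l.countP (fun pq => decide (pq.2 ∈ plus5))
      = ∑ c ∈ plus5, l.countP (fun pq => decide (pq.2 = c)) := countP_eq_sum plus5 Prod.snd l
  have hKsum := Finset.sum_le_sum hK
  have hPsum := Finset.sum_le_sum hP
  rw [Finset.sum_add_distrib, Finset.sum_const] at hKsum hPsum
  have hcK : cornersK.card = 8 := by decide
  have hcP : plus5.card = 5 := by decide
  rw [hcK] at hKsum
  rw [hcP] at hPsum
  have hle : l.countP (fun pq => decide (pq.1 ∈ cornersK ∨ pq.2 ∈ plus5)) ≤ l.length :=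
    List.countP_le_length
  simp only [smul_eq_mul, mul_one] at hKsum hPsum
  constructor
  · omega
  · intro h13
    have hEK0 : ∑ c ∈ cornersK, l.countP (fun pq => decide (pq.2 = c)) = 0 := by omega
    have hSP0 : ∑ c ∈ plus5, l.countP (fun pq => decide (pq.1 = c)) = 0 := by omega
    have hall : ∀ pq ∈ l, pq.1 ∈ cornersK ∨ pq.2 ∈ plus5 := by
      have hlen : l.countP (fun pq => decide (pq.1 ∈ cornersK ∨ pq.2 ∈ plus5)) = l.length := by
        omega
      intro pq hpq
      have := List.countP_eq_length.mp hlen pq hpq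
      simpa using this
    have hEK0' : ∀ c ∈ cornersK, ∀ pq ∈ l, ¬ (pq.2 = c) := by
      intro c hc pq hpq
      have h0 : l.countP (fun pq => decide (pq.2 = c)) = 0 :=
        (Finset.sum_eq_zero_iff.mp hEK0) c hc
      have := List.countP_eq_zero.mp h0 pq hpq
      simpa using this
    have hSP0' : ∀ c ∈ plus5, ∀ pq ∈ l, ¬ (pq.1 = c) := by
      intro c hc pq hpq
      have h0 : l.countP (fun pq => decide (pq.1 = c)) = 0 :=
        (Finset.sum_eq_zero_iff.mp hSP0) c hc
      have := List.countP_eq_zero.mp h0 pq hpq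
      simpa using this
    intro pq hpq
    rcases hall pq hpq with h1 | h2
    · refine ⟨?_, ?_⟩
      · have : ∀ x ∈ cornersK, x ∉ C9 := by decide
        exact this _ h1
      · obtain ⟨⟨e1, e2⟩, hb⟩ := helts pq hpq
        obtain ⟨o1, o2⟩ := hKodd _ h1
        have hboard : ∀ x ∈ board37, ¬(x.1 % 2 = 0) → ¬(x.2 % 2 = 0) →
            x ∈ ({(1,1),(1,-1),(-1,1),(-1,-1)} : Finset Cell) ∨ x ∈ cornersK := by decide
        rcases hboard _ hb (by omega) (by omega) with hm | hm
        · have : ∀ x ∈ ({(1,1),(1,-1),(-1,1),(-1,-1)} : Finset Cell), x ∈ C9 := by decide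
          exact this _ hm
        · exact absurd rfl (hEK0' _ hm pq hpq)
    · constructor
      · intro hC9
        have hsplit : ∀ x ∈ C9, x ∈ plus5 ∨ (x.1 % 2 = 1 ∧ x.2 % 2 = 1) := by decide
        rcases hsplit _ hC9 with hm | ⟨o1, o2⟩
        · exact hSP0' _ hm pq hpq rfl
        · obtain ⟨⟨e1, e2⟩, _⟩ := helts pq hpq
          rcases hPeven _ h2 with o3 | o3 <;> omega
      · have : ∀ x ∈ plus5, x ∈ C9 := by decide
        exact this _ h2

/-- on the 37-hole board under 8-move solitaire, the C9 complement problem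
(start with only the central 3×3 block empty, finish with pegs exactly there) cannot be
solved in fewer than 13 moves, and in any 13-move solution every move starts outside the
central nine holes and ends inside them. -/
theorem stmt_10 :
    (∀ l : List (Cell × Cell), MoveSeq board37 dirs8 (board37 \ C9) C9 l → 13 ≤ l.length) ∧
      (∀ l : List (Cell × Cell), MoveSeq board37 dirs8 (board37 \ C9) C9 l →
        l.length = 13 → ∀ pq ∈ l, pq.1 ∉ C9 ∧ pq.2 ∈ C9) := by
  exact ⟨fun l h => (key l h).1, fun l h h13 => (key l h).2 h13⟩
end

section
/- Let B be a position on the 37-hole board in 8-move solitaire, let c(B) be the number of occupied corners and p(B) the number of corner pegs (occupied holes among the 8 corners and c3,e3,c5,e5). Then h₁(B) = c(B) + ⌈(p(B) − 1)/4⌉ is an admissible heuristic: any sequence of moves from B ending with a single peg anywhere on the board has length at least h₁(B) (with h₁ overridden to 0 if B already has exactly one peg). -/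
open Finset

/-- The eight corners of the 37-hole board. -/
def corners37 : Finset Cell :=
  {(-1,-3),(1,-3),(-3,-1),(3,-1),(-3,1),(3,1),(-1,3),(1,3)}

/-- The corner-peg holes of the 37-hole board: the eight corners plus c3,e3,c5,e5. -/
def cornerPegHoles37 : Finset Cell :=
  corners37 ∪ {(-1,-1),(1,-1),(-1,1),(1,1)}

/-- Number of occupied corners. -/
def cB (B : Pos) : ℕ := (B ∩ corners37).card

/-- Number of corner pegs. -/
def pB (B : Pos) : ℕ := (B ∩ cornerPegHoles37).card

/-- The heuristic h₁(B) = c(B) + ⌈(p(B) − 1)/4⌉, overridden to 0 for one-peg positions. -/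
def h₁ (B : Pos) : ℕ := if B.card = 1 then 0 else cB B + (pB B - 1 + 3) / 4


/-- The four centre corner-peg holes. -/
def KC37 : Finset Cell := cornerPegHoles37 \ corners37

lemma dec1 : ∀ p ∈ cornerPegHoles37, ∀ d ∈ dirs8, p + d ∉ cornerPegHoles37 := by decide

lemma dec2 : ∀ p ∈ cornerPegHoles37, ∀ d ∈ dirs8,
    p + d + d ∈ board37 → p + d + d ∈ cornerPegHoles37 := by decide

lemma dec3 : ∀ p ∈ board37, p ∉ cornerPegHoles37 → ∀ d ∈ dirs8,
    p + d + d ∉ cornerPegHoles37 := by decide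

lemma dec4 : ∀ p ∈ board37, ∀ d ∈ dirs8, p + d + d ∈ board37 → p + d ∉ corners37 := by decide

lemma dec5 : corners37 ⊆ cornerPegHoles37 := by decide

lemma dec6 : KC37.card = 4 := by decide

lemma KC_subset : KC37 ⊆ cornerPegHoles37 := Finset.sdiff_subset

section JumpLemmas

variable {B B' : Pos} {p d : Cell}

/-- counting for a single jump whose jumper is on a corner-peg hole -/
lemma jump_count_K (hB : B ⊆ board37) (h : IsJump board37 dirs8 B B' p d)
    (hpK : p ∈ cornerPegHoles37) :
    (B ∩ cornerPegHoles37).card = (B' ∩ cornerPegHoles37).card := by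
  obtain ⟨hd, hpB, hmB, hr, hrB, rfl⟩ := h
  have hmK : p + d ∉ cornerPegHoles37 := dec1 p hpK d hd
  have hrK : p + d + d ∈ cornerPegHoles37 := dec2 p hpK d hd hr
  have hEq : insert (p + d + d) ((B.erase p).erase (p + d)) ∩ cornerPegHoles37
      = insert (p + d + d) ((B ∩ cornerPegHoles37).erase p) := by
    ext x
    simp only [Finset.mem_inter, Finset.mem_insert, Finset.mem_erase]
    constructor
    · rintro ⟨(rfl | ⟨hxm, hxp, hxB⟩), hxK⟩
      · exact Or.inl rfl
      · exact Or.inr ⟨hxp, hxB, hxK⟩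
    · rintro (rfl | ⟨hxp, hxB, hxK⟩)
      · exact ⟨Or.inl rfl, hrK⟩
      · refine ⟨Or.inr ⟨?_, hxp, hxB⟩, hxK⟩
        rintro rfl; exact hmK hxK
  rw [hEq, Finset.card_insert_of_notMem, Finset.card_erase_of_mem
    (Finset.mem_inter.mpr ⟨hpB, hpK⟩)]
  · have : 1 ≤ (B ∩ cornerPegHoles37).card :=
      Finset.card_pos.mpr ⟨p, Finset.mem_inter.mpr ⟨hpB, hpK⟩⟩
    omega
  · intro hmem
    exact hrB (Finset.mem_inter.mp (Finset.mem_of_mem_erase hmem)).1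

/-- counting for a single jump whose jumper is not on a corner-peg hole -/
lemma jump_count_nonK (hB : B ⊆ board37) (h : IsJump board37 dirs8 B B' p d)
    (hpK : p ∉ cornerPegHoles37) :
    (B ∩ cornerPegHoles37).card + (B' ∩ KC37).card
      = (B' ∩ cornerPegHoles37).card + (B ∩ KC37).card := by
  obtain ⟨hd, hpB, hmB, hr, hrB, rfl⟩ := h
  have hrK : p + d + d ∉ cornerPegHoles37 := dec3 p (hB hpB) hpK d hd
  have hrKC : p + d + d ∉ KC37 := fun hx => hrK (KC_subset hx)
  have hpKC : p ∉ KC37 := fun hx => hpK (KC_subset hx)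
  have key : ∀ (S : Finset Cell), p + d + d ∉ S → p ∉ S →
      insert (p + d + d) ((B.erase p).erase (p + d)) ∩ S = (B ∩ S).erase (p + d) := by
    intro S hrS hpS
    ext x
    simp only [Finset.mem_inter, Finset.mem_insert, Finset.mem_erase]
    constructor
    · rintro ⟨(rfl | ⟨hxm, hxp, hxB⟩), hxS⟩
      · exact absurd hxS hrS
      · exact ⟨hxm, hxB, hxS⟩
    · rintro ⟨hxm, hxB, hxS⟩
      refine ⟨Or.inr ⟨hxm, ?_, hxB⟩, hxS⟩
      rintro rfl; exact hpS hxS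
  rw [key _ hrK hpK, key _ hrKC hpKC]
  by_cases hmK : p + d ∈ cornerPegHoles37
  · have hmc : p + d ∉ corners37 := dec4 p (hB hpB) d hd hr
    have hmKC : p + d ∈ KC37 := Finset.mem_sdiff.mpr ⟨hmK, hmc⟩
    have h1 : p + d ∈ B ∩ cornerPegHoles37 := Finset.mem_inter.mpr ⟨hmB, hmK⟩
    have h2 : p + d ∈ B ∩ KC37 := Finset.mem_inter.mpr ⟨hmB, hmKC⟩
    rw [Finset.card_erase_of_mem h1, Finset.card_erase_of_mem h2]
    have c1 : 1 ≤ (B ∩ cornerPegHoles37).card := Finset.card_pos.mpr ⟨_, h1⟩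
    have c2 : 1 ≤ (B ∩ KC37).card := Finset.card_pos.mpr ⟨_, h2⟩
    omega
  · have hmKC : p + d ∉ KC37 := fun hx => hmK (KC_subset hx)
    rw [Finset.erase_eq_of_notMem (fun hx => hmK (Finset.mem_inter.mp hx).2),
      Finset.erase_eq_of_notMem (fun hx => hmKC (Finset.mem_inter.mp hx).2)]

end JumpLemmas

section MoveLemmas

variable {B B'' : Pos} {p q : Cell}

lemma Move.subset_board (h : Move board37 dirs8 B B'' p q) :
    B ⊆ board37 → B'' ⊆ board37 := by
  induction h with
  | single h =>
    obtain ⟨hd, hpB, hmB, hr, hrB, rfl⟩ := h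
    intro hB
    exact Finset.insert_subset hr
      (((Finset.erase_subset _ _).trans (Finset.erase_subset _ _)).trans hB)
  | cons h hm ih =>
    intro hB
    obtain ⟨hd, hpB, hmB, hr, hrB, rfl⟩ := h
    exact ih (Finset.insert_subset hr
      (((Finset.erase_subset _ _).trans (Finset.erase_subset _ _)).trans hB))

lemma Move.end_mem (h : Move board37 dirs8 B B'' p q) : q ∈ B'' := by
  induction h with
  | single h =>
    obtain ⟨hd, hpB, hmB, hr, hrB, rfl⟩ := h
    exact Finset.mem_insert_self _ _
  | cons h hm ih => exact ih

lemma move_pB_K (h : Move board37 dirs8 B B'' p q) :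
    B ⊆ board37 → p ∈ cornerPegHoles37 →
    (B ∩ cornerPegHoles37).card ≤ (B'' ∩ cornerPegHoles37).card := by
  induction h with
  | single h => intro hB hp; exact le_of_eq (jump_count_K hB h hp)
  | @cons B B' B'' p d q h hm ih =>
    intro hB hp
    have step := jump_count_K hB h hp
    have hB' : B' ⊆ board37 := by
      obtain ⟨hd, hpB, hmB, hr, hrB, rfl⟩ := h
      exact Finset.insert_subset hr
        (((Finset.erase_subset _ _).trans (Finset.erase_subset _ _)).trans hB)
    have hrK : p + d + d ∈ cornerPegHoles37 := dec2 p hp d h.1 h.2.2.2.1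
    exact step.le.trans (ih hB' hrK)

lemma move_pB_nonK (h : Move board37 dirs8 B B'' p q) :
    B ⊆ board37 → p ∉ cornerPegHoles37 →
    (B ∩ cornerPegHoles37).card + (B'' ∩ KC37).card
      ≤ (B'' ∩ cornerPegHoles37).card + (B ∩ KC37).card := by
  induction h with
  | single h => intro hB hp; exact le_of_eq (jump_count_nonK hB h hp)
  | @cons B B' B'' p d q h hm ih =>
    intro hB hp
    have step := jump_count_nonK hB h hp
    have hB' : B' ⊆ board37 := by
      obtain ⟨hd, hpB, hmB, hr, hrB, rfl⟩ := h
      exact Finset.insert_subset hr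
        (((Finset.erase_subset _ _).trans (Finset.erase_subset _ _)).trans hB)
    have hrK : p + d + d ∉ cornerPegHoles37 := dec3 p (hB h.2.1) hp d h.1
    have := ih hB' hrK
    omega

lemma move_pB_bound (h : Move board37 dirs8 B B'' p q) (hB : B ⊆ board37)
    (hp : p ∉ cornerPegHoles37) :
    (B ∩ cornerPegHoles37).card ≤ (B'' ∩ cornerPegHoles37).card + 4 := by
  have h1 := move_pB_nonK h hB hp
  have h2 : (B ∩ KC37).card ≤ 4 := by
    calc (B ∩ KC37).card ≤ KC37.card := Finset.card_le_card Finset.inter_subset_right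
    _ = 4 := dec6
  omega

lemma move_corner_stays (h : Move board37 dirs8 B B'' p q) :
    B ⊆ board37 → ∀ c ∈ corners37, c ∈ B → p ≠ c → c ∈ B'' ∧ q ≠ c := by
  induction h with
  | @single B B' p d h =>
    intro hB c hc hcB hpc
    obtain ⟨hd, hpB, hmB, hr, hrB, rfl⟩ := h
    have hmc : p + d ∉ corners37 := dec4 p (hB hpB) d hd hr
    have hcB' : c ∈ insert (p + d + d) ((B.erase p).erase (p + d)) := by
      refine Finset.mem_insert_of_mem (Finset.mem_erase.mpr ⟨?_, Finset.mem_erase.mpr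
        ⟨fun hx => hpc hx.symm, hcB⟩⟩)
      rintro rfl; exact hmc hc
    refine ⟨hcB', ?_⟩
    rintro rfl; exact hrB hcB
  | @cons B B' B'' p d q h hm ih =>
    intro hB c hc hcB hpc
    obtain ⟨hd, hpB, hmB, hr, hrB, rfl⟩ := h
    have hmc : p + d ∉ corners37 := dec4 p (hB hpB) d hd hr
    have hcB' : c ∈ insert (p + d + d) ((B.erase p).erase (p + d)) := by
      refine Finset.mem_insert_of_mem (Finset.mem_erase.mpr ⟨?_, Finset.mem_erase.mpr
        ⟨fun hx => hpc hx.symm, hcB⟩⟩)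
      rintro rfl; exact hmc hc
    have hB' : insert (p + d + d) ((B.erase p).erase (p + d)) ⊆ board37 :=
      Finset.insert_subset hr
        (((Finset.erase_subset _ _).trans (Finset.erase_subset _ _)).trans hB)
    have hrc : p + d + d ≠ c := by rintro rfl; exact hrB hcB
    exact ih hB' c hc hcB' hrc

end MoveLemmas

section SeqLemmas

lemma seq_subset {B B₂ : Pos} {l : List (Cell × Cell)}
    (h : MoveSeq board37 dirs8 B B₂ l) : B ⊆ board37 → B₂ ⊆ board37 := by
  induction h with
  | nil B => exact id
  | cons h hs ih => intro hB; exact ih (h.subset_board hB)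

lemma seq_pB {B B₂ : Pos} {l : List (Cell × Cell)}
    (h : MoveSeq board37 dirs8 B B₂ l) : B ⊆ board37 →
    (B ∩ cornerPegHoles37).card ≤ (B₂ ∩ cornerPegHoles37).card
      + 4 * (l.filter (fun m => m.1 ∉ cornerPegHoles37)).length := by
  induction h with
  | nil B => intro _; simp
  | @cons B B' B'' p q l h hs ih =>
    intro hB
    have hB' : B' ⊆ board37 := h.subset_board hB
    have ih' := ih hB'
    by_cases hp : p ∈ cornerPegHoles37
    · have step := move_pB_K h hB hp
      have : ((p, q) :: l).filter (fun m => m.1 ∉ cornerPegHoles37)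
          = l.filter (fun m => m.1 ∉ cornerPegHoles37) := by
        simp [List.filter_cons, hp]
      rw [this]; omega
    · have step := move_pB_bound h hB hp
      have : (((p, q) :: l).filter (fun m => m.1 ∉ cornerPegHoles37)).length
          = (l.filter (fun m => m.1 ∉ cornerPegHoles37)).length + 1 := by
        simp [List.filter_cons, hp]
      rw [this]; omega

lemma seq_corner_start {B B₂ : Pos} {l : List (Cell × Cell)}
    (h : MoveSeq board37 dirs8 B B₂ l) : B ⊆ board37 → B₂.card = 1 →
    ∀ c ∈ corners37, c ∈ B → 2 ≤ B.card → ∃ q, (c, q) ∈ l := by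
  induction h with
  | nil B => intro _ h1 c _ _ h2; omega
  | @cons B B' B'' p q l h hs ih =>
    intro hB h1 c hc hcB hcard
    by_cases hpc : p = c
    · exact ⟨q, by rw [hpc]; exact List.mem_cons_self⟩
    · obtain ⟨hcB', hqc⟩ := move_corner_stays h hB c hc hcB hpc
      have hqB' : q ∈ B' := h.end_mem
      have hcard' : 2 ≤ B'.card := by
        rw [Nat.succ_le_iff]
        exact Finset.one_lt_card.mpr ⟨c, hcB', q, hqB', fun hx => hqc hx.symm⟩
      obtain ⟨q', hq'⟩ := ih (h.subset_board hB) h1 c hc hcB' hcard'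
      exact ⟨q', List.mem_cons_of_mem _ hq'⟩

lemma filter_two {α : Type*} (p q : α → Prop) [DecidablePred p] [DecidablePred q]
    (hpq : ∀ x, p x → ¬ q x) (l : List α) :
    (l.filter (fun x => p x)).length + (l.filter (fun x => q x)).length ≤ l.length := by
  induction l with
  | nil => simp
  | cons a t ih =>
    by_cases hp : p a <;> by_cases hq : q a <;>
      simp [List.filter_cons, hp, hq] <;> first | omega | exact absurd hq (hpq a hp)

end SeqLemmas

/-- h₁ is admissible on the 37-hole board under 8-move solitaire: any
sequence of moves from `B` ending with a single peg anywhere on the board has length at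
least `h₁ B`. -/
theorem stmt_14 (B : Pos) (hB : B ⊆ board37) (t : Cell) (ht : t ∈ board37)
    (l : List (Cell × Cell)) (h : MoveSeq board37 dirs8 B {t} l) :
    h₁ B ≤ l.length := by
  unfold h₁
  split_ifs with hc1
  · exact Nat.zero_le _
  by_cases hc0 : B.card = 0
  · rw [Finset.card_eq_zero.mp hc0]
    simp [cB, pB]
  have hcard : 2 ≤ B.card := by omega
  have hsub : B ∩ corners37 ⊆
      ((l.filter (fun m => m.1 ∈ corners37)).map Prod.fst).toFinset := by
    intro c hcmem
    obtain ⟨hcB, hcc⟩ := Finset.mem_inter.mp hcmem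
    obtain ⟨q, hq⟩ := seq_corner_start h hB (by simp) c hcc hcB hcard
    simp only [List.mem_toFinset, List.mem_map]
    exact ⟨(c, q), List.mem_filter.mpr ⟨hq, by simpa⟩, rfl⟩
  have h1' : cB B ≤ (l.filter (fun m => m.1 ∈ corners37)).length := by
    calc cB B ≤ ((l.filter (fun m => m.1 ∈ corners37)).map Prod.fst).toFinset.card :=
        Finset.card_le_card hsub
      _ ≤ ((l.filter (fun m => m.1 ∈ corners37)).map Prod.fst).length :=
        List.toFinset_card_le _
      _ = (l.filter (fun m => m.1 ∈ corners37)).length := List.length_map _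
  have h2' : pB B ≤ 1 + 4 * (l.filter (fun m => m.1 ∉ cornerPegHoles37)).length := by
    have := seq_pB h hB
    have ht1 : (({t} : Pos) ∩ cornerPegHoles37).card ≤ 1 := by
      calc (({t} : Pos) ∩ cornerPegHoles37).card ≤ ({t} : Pos).card :=
          Finset.card_le_card Finset.inter_subset_left
        _ = 1 := Finset.card_singleton t
    unfold pB
    omega
  have h3' := filter_two (fun m : Cell × Cell => m.1 ∈ corners37)
    (fun m : Cell × Cell => m.1 ∉ cornerPegHoles37)
    (fun m hm hn => hn (dec5 hm)) l
  omega
end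

section
/- In any peg solitaire game (4-, 6-, or 8-move), immediately before the final move of a solution that ends with exactly one peg, the peg that makes the final move must be the only peg in its category; equivalently, if a position B has at least two pegs in every category, at least 2 more moves are required to reach a single-peg position. -/
open Finset

/-- The category of a hole: its coordinates modulo 2. -/
def cat (p : Cell) : ZMod 2 × ZMod 2 := ((p.1 : ZMod 2), (p.2 : ZMod 2))

lemma cat_add_two (p d : Cell) : cat (p + d + d) = cat p := by
  have h2 : ∀ a : ZMod 2, a + a = 0 := by decide
  simp only [cat, Prod.ext_iff, Prod.fst_add, Prod.snd_add]
  push_cast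
  constructor <;> rw [add_assoc, h2, add_zero]

lemma cat_add_ne {d : Cell} (hd : d ∈ dirs8) (p : Cell) : cat (p + d) ≠ cat p := by
  fin_cases hd <;>
    simp [cat, Prod.ext_iff]

lemma jump_filter {board dirs : Finset Cell} (hdirs : dirs ⊆ dirs8)
    {B B' : Pos} {p d : Cell} (h : IsJump board dirs B B' p d) (k : ZMod 2 × ZMod 2)
    (hk : cat p = k) :
    (B'.filter (fun v => cat v = k)).card = (B.filter (fun v => cat v = k)).card := by
  obtain ⟨hd, hp, hpd, _, hnot, hB'⟩ := h
  have hc2 : cat (p + d + d) = k := (cat_add_two p d).trans hk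
  have hne : cat (p + d) ≠ k := fun hh => cat_add_ne (hdirs hd) p (hh.trans hk.symm)
  subst hB'
  rw [Finset.filter_insert, if_pos hc2, Finset.filter_erase, Finset.filter_erase,
    Finset.erase_eq_of_notMem (by simp [hne]),
    Finset.card_insert_of_notMem (fun hh => hnot (Finset.mem_filter.1 (Finset.mem_of_mem_erase hh)).1),
    Finset.card_erase_of_mem (Finset.mem_filter.2 ⟨hp, hk⟩)]
  have : 0 < (B.filter (fun v => cat v = k)).card :=
    Finset.card_pos.2 ⟨p, Finset.mem_filter.2 ⟨hp, hk⟩⟩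
  omega

lemma move_props {board dirs : Finset Cell} (hdirs : dirs ⊆ dirs8)
    {B B' : Pos} {p q : Cell} (h : Move board dirs B B' p q) :
    cat q = cat p ∧ q ∈ B' ∧ p ∈ B ∧
      (B'.filter (fun v => cat v = cat p)).card
        = (B.filter (fun v => cat v = cat p)).card := by
  induction h with
  | @single B B' p d hj =>
    refine ⟨cat_add_two p d, ?_, hj.2.1, jump_filter hdirs hj _ rfl⟩
    rw [hj.2.2.2.2.2]; exact Finset.mem_insert_self _ _
  | @cons B B' B'' p d q hj hm ih =>
    have hc : cat (p + d + d) = cat p := cat_add_two p d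
    refine ⟨ih.1.trans hc, ih.2.1, hj.2.1, ?_⟩
    rw [← hc, ih.2.2.2, hc, jump_filter hdirs hj _ rfl]

/-- in any peg solitaire game (jump directions among the eight unit
directions, covering 4-, 6- and 8-move solitaire), immediately before the final move of a
solution ending with exactly one peg, the moving peg must be the only peg in its category;
equivalently, if a position has at least two pegs in every category, at least 2 more moves
are required to reach a single-peg position. -/
theorem stmt_15 (board dirs : Finset Cell) (hdirs : dirs ⊆ dirs8) :
    (∀ (B B' : Pos) (p q : Cell), Move board dirs B B' p q → B' = {q} →
        B.filter (fun v => cat v = cat p) = {p}) ∧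
      (∀ B : Pos, (∀ k : ZMod 2 × ZMod 2, 2 ≤ (B.filter (fun v => cat v = k)).card) →
        ∀ (t : Cell) (l : List (Cell × Cell)), MoveSeq board dirs B {t} l →
          2 ≤ l.length) := by
  have part1 : ∀ (B B' : Pos) (p q : Cell), Move board dirs B B' p q → B' = {q} →
      B.filter (fun v => cat v = cat p) = {p} := by
    intro B B' p q hm hB'
    obtain ⟨hcq, hq, hp, hcard⟩ := move_props hdirs hm
    have h1 : (B.filter (fun v => cat v = cat p)).card = 1 := by
      rw [← hcard, hB']
      rw [Finset.filter_singleton, if_pos (by rw [hcq])]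
      simp
    obtain ⟨a, ha⟩ := Finset.card_eq_one.1 h1
    have : p ∈ ({a} : Pos) := ha ▸ Finset.mem_filter.2 ⟨hp, rfl⟩
    rw [ha, Finset.mem_singleton.1 this]
  refine ⟨part1, ?_⟩
  intro B hB t l hs
  have hone : ∀ s : Cell, (({s} : Pos).filter (fun v => cat v = cat s + (1, 0))).card ≤ 1 := by
    intro s
    simpa using Finset.card_filter_le ({s} : Pos) (fun v => cat v = cat s + (1, 0))
  cases hs with
  | nil =>
    exfalso
    have h := hB (cat t + (1, 0))
    have h1 := hone t
    omega
  | @cons _ B' _ p q l hm hs' =>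
    cases hs' with
    | nil =>
      exfalso
      have hq := (move_props hdirs hm).2.1
      have h1 := part1 B {t} p q hm (by rw [Finset.mem_singleton.1 hq])
      have h2 := hB (cat p)
      rw [h1] at h2
      simp at h2
    | cons hm2 hs2 => simp
end

section
/- On the 33-hole board under 8-move solitaire, the corner-counting lower bound gives: no solution to the central game has fewer than 14 moves. (The actual minimum, found by search, is 15.) -/
open Finset

def cellsL : List Cell := [(-3,-1), (-3,0), (-3,1), (-2,-1), (-2,0), (-2,1), (-1,-3), (-1,-2), (-1,-1), (-1,0), (-1,1), (-1,2), (-1,3), (0,-3), (0,-2), (0,-1), (0,0), (0,1), (0,2), (0,3), (1,-3), (1,-2), (1,-1), (1,0), (1,1), (1,2), (1,3), (2,-1), (2,0), (2,1), (3,-1), (3,0), (3,1)]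

def encL : List Cell → Pos → ℕ
  | [], _ => 0
  | c :: cs, B => (if c ∈ B then 1 else 0) + 2 * encL cs B

def enc (B : Pos) : ℕ := encL cellsL B

theorem encL_congr {B B' : Pos} : ∀ (l : List Cell), (∀ c ∈ l, (c ∈ B ↔ c ∈ B')) →
    encL l B = encL l B'
  | [], _ => rfl
  | c :: cs, h => by
    simp only [encL]
    rw [encL_congr cs (fun c hc => h c (List.mem_cons_of_mem _ hc))]
    congr 1
    simp [h c List.mem_cons_self]

def posIn : List Cell → Cell → ℕ
  | [], _ => 0
  | c :: cs, a => if c = a then 0 else posIn cs a + 1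

theorem encL_erase {a : Cell} {B : Pos} (haB : a ∈ B) :
    ∀ (l : List Cell), l.Nodup → a ∈ l →
    encL l B = encL l (B.erase a) + 2 ^ (posIn l a)
  | [], _, hal => by simp at hal
  | c :: cs, hnd, hal => by
    rcases List.mem_cons.1 hal with h | h
    · subst h
      have hnotin : a ∉ cs := (List.nodup_cons.1 hnd).1
      have hcongr : encL cs B = encL cs (B.erase a) := encL_congr cs (fun c hc => by
        constructor
        · intro hcB
          exact Finset.mem_erase.2 ⟨fun hca => hnotin (hca ▸ hc), hcB⟩
        · exact fun hc' => (Finset.mem_erase.1 hc').2)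
      simp only [encL, posIn, eq_self_iff_true, if_true, hcongr, pow_zero, if_pos haB,
        if_neg (Finset.notMem_erase a B)]
      omega
    · have hca : c ≠ a := fun hca => by
        subst hca; exact (List.nodup_cons.1 hnd).1 h
      have ih := encL_erase haB cs (List.nodup_cons.1 hnd).2 h
      have hif : (c ∈ B.erase a) ↔ (c ∈ B) := by
        simp [Finset.mem_erase, hca]
      simp only [encL, posIn, if_neg hca, ih, pow_succ, if_congr hif rfl rfl]
      ring

theorem encL_insert {a : Cell} {B : Pos} (haB : a ∉ B)
    (l : List Cell) (hnd : l.Nodup) (hal : a ∈ l) :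
    encL l (insert a B) = encL l B + 2 ^ (posIn l a) := by
  have h2 := encL_erase (Finset.mem_insert_self a B) l hnd hal
  rwa [Finset.erase_insert haB] at h2

theorem encL_bit {B : Pos} : ∀ (l : List Cell) (i : ℕ), i < l.length →
    encL l B / 2 ^ i % 2 = if l.getD i (0,0) ∈ B then 1 else 0
  | [], i, hi => by simp at hi
  | c :: cs, 0, _ => by
    simp only [encL, pow_zero, Nat.div_one, List.getD_cons_zero]
    rcases em (c ∈ B) with h | h <;> simp [h] <;> omega
  | c :: cs, i+1, hi => by
    have ih := encL_bit (B := B) cs i (by simpa using Nat.lt_of_succ_lt_succ hi)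
    simp only [encL, List.getD_cons_succ]
    rw [pow_succ', ← Nat.div_div_eq_div_mul]
    have hstep : ((if c ∈ B then 1 else 0) + 2 * encL cs B) / 2 = encL cs B := by
      rcases em (c ∈ B) with h | h <;> simp [h] <;> omega
    rw [hstep, ih]


def S4 : Finset Cell := {(-1,-1),(-1,1),(1,-1),(1,1)}
def cornerF : Finset Cell := {(-3,-1),(-3,1),(-1,-3),(-1,3),(1,-3),(1,3),(3,-1),(3,1)}
def w4 (c : Cell) : ℕ := if c ∈ cornerF then 5 else if c ∈ S4 then 1 else 0
noncomputable def pot (B : Pos) : ℕ := ∑ c ∈ B, w4 c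
def oddodd (c : Cell) : Prop := c.1 % 2 = 1 ∧ c.2 % 2 = 1

instance : DecidablePred oddodd := fun c => by unfold oddodd; infer_instance

-- parity lemmas
theorem odd_shift2 (p d : Cell) : oddodd (p + d + d) ↔ oddodd p := by
  simp only [oddodd, Prod.fst_add, Prod.snd_add]
  omega

theorem odd_mid {p d : Cell} (hd : d ∈ dirs8) (hp : oddodd p) : ¬ oddodd (p + d) := by
  fin_cases hd <;>
    simp only [oddodd, Prod.fst_add, Prod.snd_add] at hp ⊢ <;> omega

theorem mid_S4 : ∀ p ∈ board33, ∀ d ∈ dirs8, p + d ∈ board33 → p + d + d ∈ board33 →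
    oddodd (p + d) → p + d ∈ S4 := by decide

theorem w4_le5 (c : Cell) : w4 c ≤ 5 := by unfold w4; split <;> [omega; split <;> omega]

theorem w4_support {c : Cell} (h : ¬ oddodd c) : w4 c = 0 := by
  have h1 : ∀ c' ∈ cornerF, oddodd c' := by decide
  have h2 : ∀ c' ∈ S4, oddodd c' := by decide
  unfold w4
  split
  · exact absurd (h1 _ ‹_›) h
  · split
    · exact absurd (h2 _ ‹_›) h
    · rfl

theorem w4_S4 {c : Cell} (h : c ∈ S4) : w4 c = 1 := by
  have : c ∉ cornerF := by revert c; decide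
  unfold w4
  rw [if_neg this, if_pos h]

theorem w4_oddodd_board {c : Cell} (hc : c ∈ board33) (h : oddodd c) : 1 ≤ w4 c := by
  revert h
  revert hc
  revert c
  decide

theorem S4_oddodd {c : Cell} (h : c ∈ S4) : oddodd c := by revert c; decide

theorem dirs8_ne0 : ∀ d ∈ dirs8, d ≠ ((0:ℤ),(0:ℤ)) := by decide

-- single jump arithmetic
theorem jump_pot {B B' : Pos} {p d : Cell} (h : IsJump board33 dirs8 B B' p d) :
    pot B + w4 (p+d+d) = pot B' + w4 p + w4 (p+d) ∧ B' = insert (p+d+d) ((B.erase p).erase (p+d)) := by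
  obtain ⟨hd, hp, hmid, hlb, hlB, hB'⟩ := h
  refine ⟨?_, hB'⟩
  have hne : p + d ≠ p := by
    intro hh
    have : d = 0 := by
      have := congrArg Prod.fst hh
      have := congrArg Prod.snd hh
      simp only [Prod.fst_add, Prod.snd_add] at *
      ext <;> simp <;> omega
    exact dirs8_ne0 d hd (by rw [this]; rfl)
  have hmid' : p + d ∈ B.erase p := Finset.mem_erase.2 ⟨hne, hmid⟩
  have hlb' : p + d + d ∉ (B.erase p).erase (p + d) :=
    fun hh => hlB (Finset.mem_of_mem_erase (Finset.mem_of_mem_erase hh))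
  have e1 : pot B' = w4 (p+d+d) + pot ((B.erase p).erase (p+d)) := by
    rw [hB', pot, Finset.sum_insert hlb']; rfl
  have e2 : pot (B.erase p) = w4 (p+d) + pot ((B.erase p).erase (p+d)) := by
    rw [pot, ← Finset.add_sum_erase _ _ hmid']; rfl
  have e3 : pot B = w4 p + pot (B.erase p) := by
    rw [pot, ← Finset.add_sum_erase _ _ hp]; rfl
  omega

theorem move_aux {B B'' : Pos} {p q : Cell} (h : Move board33 dirs8 B B'' p q) :
    B ⊆ board33 →
    (B'' ⊆ board33 ∧ q ∈ board33 ∧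
      (oddodd p → oddodd q ∧ pot B + w4 q ≤ pot B'' + w4 p) ∧
      (¬ oddodd p → pot B + (B'' ∩ S4).card ≤ pot B'' + (B ∩ S4).card)) := by
  induction h with
  | @single B B' p d h =>
    intro hB
    obtain ⟨harith, hB'⟩ := jump_pot h
    obtain ⟨hd, hp, hmid, hlb, hlB, -⟩ := h
    have hBsub : B' ⊆ board33 := by
      rw [hB']
      intro c hc
      rcases Finset.mem_insert.1 hc with hh | hh
      · exact hh ▸ hlb
      · exact hB (Finset.mem_of_mem_erase (Finset.mem_of_mem_erase hh))
    refine ⟨hBsub, hlb, ?_, ?_⟩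
    · intro hop
      have hq : oddodd (p + d + d) := (odd_shift2 p d).2 hop
      have hm0 : w4 (p + d) = 0 := w4_support (odd_mid hd hop)
      exact ⟨hq, by omega⟩
    · intro hop
      have hlnot : ¬ oddodd (p + d + d) := fun hh => hop ((odd_shift2 p d).1 hh)
      have hw4p : w4 p = 0 := w4_support hop
      have hw4l : w4 (p + d + d) = 0 := w4_support hlnot
      have hlS4 : p + d + d ∉ S4 := fun hh => hlnot (S4_oddodd hh)
      have hpS4 : p ∉ S4 := fun hh => hop (S4_oddodd hh)
      have hint : B' ∩ S4 = ((B.erase p).erase (p+d)) ∩ S4 := by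
        rw [hB', Finset.insert_inter_of_notMem hlS4]
      rcases em (p + d ∈ S4) with hmS | hmS
      · have hw4m : w4 (p + d) = 1 := w4_S4 hmS
        have : ((B.erase p).erase (p+d)) ∩ S4 = (B ∩ S4).erase (p + d) := by
          ext c
          simp only [Finset.mem_inter, Finset.mem_erase]
          constructor
          · rintro ⟨⟨h1, h2, h3⟩, h4⟩; exact ⟨h1, h3, h4⟩
          · rintro ⟨h1, h2, h3⟩
            refine ⟨⟨h1, ?_, h2⟩, h3⟩
            intro hcp
            exact hpS4 (hcp ▸ h3)
        have hmem : p + d ∈ B ∩ S4 := Finset.mem_inter.2 ⟨hmid, hmS⟩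
        have hcard : ((B ∩ S4).erase (p+d)).card + 1 = (B ∩ S4).card := by
          rw [Finset.card_erase_of_mem hmem]
          have : 1 ≤ (B ∩ S4).card := Finset.card_pos.2 ⟨p + d, hmem⟩
          omega
        rw [hint, this]
        omega
      · have hw4m : w4 (p + d) = 0 := by
          rcases em (oddodd (p + d)) with ho | ho
          · exact absurd (mid_S4 p (hB hp) d hd (hB hmid) hlb ho) hmS
          · exact w4_support ho
        have hsub : B' ∩ S4 ⊆ B ∩ S4 := by
          rw [hint]
          intro c hc
          have := Finset.mem_inter.1 hc
          exact Finset.mem_inter.2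
            ⟨Finset.mem_of_mem_erase (Finset.mem_of_mem_erase this.1), this.2⟩
        have := Finset.card_le_card hsub
        omega
  | @cons B B' B'' p d q h hm ih =>
    intro hB
    obtain ⟨harith, hB'⟩ := jump_pot h
    obtain ⟨hd, hp, hmid, hlb, hlB, -⟩ := h
    have hBsub : B' ⊆ board33 := by
      rw [hB']
      intro c hc
      rcases Finset.mem_insert.1 hc with hh | hh
      · exact hh ▸ hlb
      · exact hB (Finset.mem_of_mem_erase (Finset.mem_of_mem_erase hh))
    obtain ⟨hB''sub, hq, hodd, heven⟩ := ih hBsub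
    refine ⟨hB''sub, hq, ?_, ?_⟩
    · intro hop
      have hl : oddodd (p + d + d) := (odd_shift2 p d).2 hop
      have hm0 : w4 (p + d) = 0 := w4_support (odd_mid hd hop)
      obtain ⟨hqodd, hineq⟩ := hodd hl
      exact ⟨hqodd, by omega⟩
    · intro hop
      have hlnot : ¬ oddodd (p + d + d) := fun hh => hop ((odd_shift2 p d).1 hh)
      have hineq2 := heven hlnot
      -- single-step inequality: pot B + (B' ∩ S4).card ≤ pot B' + (B ∩ S4).card
      have hw4p : w4 p = 0 := w4_support hop
      have hw4l : w4 (p + d + d) = 0 := w4_support hlnot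
      have hlS4 : p + d + d ∉ S4 := fun hh => hlnot (S4_oddodd hh)
      have hpS4 : p ∉ S4 := fun hh => hop (S4_oddodd hh)
      have hint : B' ∩ S4 = ((B.erase p).erase (p+d)) ∩ S4 := by
        rw [hB', Finset.insert_inter_of_notMem hlS4]
      rcases em (p + d ∈ S4) with hmS | hmS
      · have hw4m : w4 (p + d) = 1 := w4_S4 hmS
        have : ((B.erase p).erase (p+d)) ∩ S4 = (B ∩ S4).erase (p + d) := by
          ext c
          simp only [Finset.mem_inter, Finset.mem_erase]
          constructor
          · rintro ⟨⟨h1, h2, h3⟩, h4⟩; exact ⟨h1, h3, h4⟩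
          · rintro ⟨h1, h2, h3⟩
            refine ⟨⟨h1, ?_, h2⟩, h3⟩
            intro hcp
            exact hpS4 (hcp ▸ h3)
        have hmem : p + d ∈ B ∩ S4 := Finset.mem_inter.2 ⟨hmid, hmS⟩
        have hcard : ((B ∩ S4).erase (p+d)).card + 1 = (B ∩ S4).card := by
          rw [Finset.card_erase_of_mem hmem]
          have : 1 ≤ (B ∩ S4).card := Finset.card_pos.2 ⟨p + d, hmem⟩
          omega
        rw [hint, this] at hineq2
        omega
      · have hw4m : w4 (p + d) = 0 := by
          rcases em (oddodd (p + d)) with ho | ho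
          · exact absurd (mid_S4 p (hB hp) d hd (hB hmid) hlb ho) hmS
          · exact w4_support ho
        have hsub : B' ∩ S4 ⊆ B ∩ S4 := by
          rw [hint]
          intro c hc
          have := Finset.mem_inter.1 hc
          exact Finset.mem_inter.2
            ⟨Finset.mem_of_mem_erase (Finset.mem_of_mem_erase this.1), this.2⟩
        have := Finset.card_le_card hsub
        omega

theorem move_pot {B B'' : Pos} {p q : Cell} (h : Move board33 dirs8 B B'' p q)
    (hB : B ⊆ board33) : pot B ≤ pot B'' + 4 ∧ B'' ⊆ board33 := by
  obtain ⟨hsub, hq, hodd, heven⟩ := move_aux h hB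
  refine ⟨?_, hsub⟩
  rcases em (oddodd p) with hop | hop
  · obtain ⟨hqo, hineq⟩ := hodd hop
    have h1 := w4_le5 p
    have h2 := w4_oddodd_board hq hqo
    omega
  · have hineq := heven hop
    have : (B ∩ S4).card ≤ S4.card := Finset.card_le_card Finset.inter_subset_right
    have hS4card : S4.card = 4 := by decide
    omega

theorem seq_pot {B T : Pos} {l : List (Cell × Cell)}
    (hs : MoveSeq board33 dirs8 B T l) (hB : B ⊆ board33) :
    pot B ≤ pot T + 4 * l.length ∧ T ⊆ board33 := by
  induction hs with
  | nil B => exact ⟨by simp, hB⟩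
  | @cons B B' B'' p q l h hs ih =>
    obtain ⟨hdrop, hB'sub⟩ := move_pot h hB
    obtain ⟨hrest, hTsub⟩ := ih hB'sub
    refine ⟨?_, hTsub⟩
    simp only [List.length_cons]
    omega

def potGo : List ℕ → ℕ → ℕ
  | [], _ => 0
  | w :: ws, n => w * (n % 2) + potGo ws (n / 2)

def wlist : List ℕ := [5, 0, 5, 0, 0, 0, 5, 0, 1, 0, 1, 0, 5, 0, 0, 0, 0, 0, 0, 0, 5, 0, 1, 0, 1, 0, 5, 0, 0, 0, 5, 0, 5]

def pot4m (n : ℕ) : ℕ := potGo wlist n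

theorem potGo_encL {B : Pos} : ∀ (l : List Cell),
    potGo (l.map w4) (encL l B) = (l.map (fun c => if c ∈ B then w4 c else 0)).sum
  | [] => rfl
  | c :: cs => by
    have ih := potGo_encL (B := B) cs
    simp only [List.map_cons, potGo, encL, List.sum_cons]
    have h1 : ((if c ∈ B then 1 else 0) + 2 * encL cs B) % 2 = if c ∈ B then 1 else 0 := by
      rcases em (c ∈ B) with h | h <;> simp [h] <;> omega
    have h2 : ((if c ∈ B then 1 else 0) + 2 * encL cs B) / 2 = encL cs B := by
      rcases em (c ∈ B) with h | h <;> simp [h] <;> omega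
    rw [h1, h2, ih]
    rcases em (c ∈ B) with h | h <;> simp [h]

theorem sum_if_w4 : ∀ (l : List Cell), l.Nodup → ∀ (B : Pos), (∀ c ∈ B, c ∈ l) →
    (l.map (fun c => if c ∈ B then w4 c else 0)).sum = pot B
  | [], _, B, hBl => by
    have : B = ∅ := Finset.eq_empty_of_forall_notMem (fun c hc => by simpa using hBl c hc)
    simp [this, pot]
  | c :: cs, hnd, B, hBl => by
    simp only [List.map_cons, List.sum_cons]
    rcases em (c ∈ B) with h | h
    · have htail : (cs.map (fun c' => if c' ∈ B then w4 c' else 0)).sum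
          = (cs.map (fun c' => if c' ∈ B.erase c then w4 c' else 0)).sum := by
        apply congrArg
        apply List.map_congr_left
        intro c' hc'
        have : c' ≠ c := fun hh => (List.nodup_cons.1 hnd).1 (hh ▸ hc')
        simp [Finset.mem_erase, this]
      rw [if_pos h, htail, sum_if_w4 cs (List.nodup_cons.1 hnd).2 (B.erase c) (fun c' hc' => by
        have := hBl c' (Finset.mem_of_mem_erase hc')
        rcases List.mem_cons.1 this with hh | hh
        · exact absurd hh (Finset.mem_erase.1 hc').1
        · exact hh)]
      unfold pot
      rw [← Finset.add_sum_erase _ _ h]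
    · rw [if_neg h, sum_if_w4 cs (List.nodup_cons.1 hnd).2 B (fun c' hc' => by
          rcases List.mem_cons.1 (hBl c' hc') with hh | hh
          · exact absurd (hh ▸ hc') h
          · exact hh), zero_add]

theorem cellsL_nodup : cellsL.Nodup := by decide

theorem mem_board_cellsL : ∀ c ∈ board33, c ∈ cellsL := by decide

theorem wlist_eq : wlist = cellsL.map w4 := by decide

theorem pot4m_enc {B : Pos} (hB : B ⊆ board33) : pot4m (enc B) = pot B := by
  rw [pot4m, wlist_eq, enc, potGo_encL]
  exact sum_if_w4 cellsL cellsL_nodup B (fun c hc => mem_board_cellsL c (hB hc))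

def jtab : Nat → List (Nat × Nat × Nat)
  | 0 => [(8,256,8), (2,4,2), (16,1024,10)]
  | 1 => [(16,512,9), (32,2048,11), (8,128,7)]
  | 2 => [(32,1024,10), (2,1,0), (16,256,8)]
  | 3 => [(256,32768,15), (16,32,5), (512,131072,17), (128,8192,13)]
  | 4 => [(512,65536,16), (1024,262144,18), (256,16384,14)]
  | 5 => [(1024,131072,17), (16,8,3), (2048,524288,19), (512,32768,15)]
  | 6 => [(8192,1048576,20), (128,256,8), (16384,4194304,22)]
  | 7 => [(16384,2097152,21), (256,512,9), (32768,8388608,23), (8,2,1)]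
  | 8 => [(32768,4194304,22), (8,1,0), (512,1024,10), (128,64,6), (65536,16777216,24), (16384,1048576,20), (16,4,2)]
  | 9 => [(65536,8388608,23), (16,2,1), (1024,2048,11), (256,128,7), (131072,33554432,25), (32768,2097152,21)]
  | 10 => [(131072,16777216,24), (32,4,2), (2048,4096,12), (512,256,8), (262144,67108864,26), (65536,4194304,22), (16,1,0)]
  | 11 => [(262144,33554432,25), (1024,512,9), (131072,8388608,23), (32,2,1)]
  | 12 => [(524288,67108864,26), (2048,1024,10), (262144,16777216,24)]
  | 13 => [(16384,32768,15), (2097152,134217728,27), (128,8,3)]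
  | 14 => [(32768,65536,16), (4194304,268435456,28), (256,16,4)]
  | 15 => [(4194304,134217728,27), (256,8,3), (65536,131072,17), (16384,8192,13), (8388608,536870912,29), (512,32,5)]
  | 16 => [(8388608,268435456,28), (512,16,4), (131072,262144,18), (32768,16384,14)]
  | 17 => [(16777216,536870912,29), (1024,32,5), (262144,524288,19), (65536,32768,15), (8388608,134217728,27), (512,8,3)]
  | 18 => [(131072,65536,16), (16777216,268435456,28), (1024,16,4)]
  | 19 => [(262144,131072,17), (33554432,536870912,29), (2048,32,5)]
  | 20 => [(8192,64,6), (2097152,4194304,22), (16384,256,8)]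
  | 21 => [(16384,128,7), (4194304,8388608,23), (134217728,2147483648,31), (32768,512,9)]
  | 22 => [(134217728,1073741824,30), (32768,256,8), (8388608,16777216,24), (2097152,1048576,20), (268435456,4294967296,32), (65536,1024,10), (16384,64,6)]
  | 23 => [(268435456,2147483648,31), (65536,512,9), (16777216,33554432,25), (4194304,2097152,21), (131072,2048,11), (32768,128,7)]
  | 24 => [(536870912,4294967296,32), (131072,1024,10), (33554432,67108864,26), (8388608,4194304,22), (268435456,1073741824,30), (262144,4096,12), (65536,256,8)]
  | 25 => [(262144,2048,11), (16777216,8388608,23), (536870912,2147483648,31), (131072,512,9)]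
  | 26 => [(524288,4096,12), (33554432,16777216,24), (262144,1024,10)]
  | 27 => [(4194304,32768,15), (268435456,536870912,29), (8388608,131072,17), (2097152,8192,13)]
  | 28 => [(8388608,65536,16), (16777216,262144,18), (4194304,16384,14)]
  | 29 => [(16777216,131072,17), (268435456,134217728,27), (33554432,524288,19), (8388608,32768,15)]
  | 30 => [(134217728,4194304,22), (2147483648,4294967296,32), (268435456,16777216,24)]
  | 31 => [(268435456,8388608,23), (536870912,33554432,25), (134217728,2097152,21)]
  | 32 => [(536870912,16777216,24), (2147483648,1073741824,30), (268435456,4194304,22)]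
  | _ => []


def extJ : ℕ → ℕ → ℕ → List ℕ
  | 0, _, _ => []
  | fuel+1, st, cur =>
    (jtab cur).flatMap (fun e =>
      if st / e.1 % 2 = 1 ∧ st / e.2.1 % 2 = 0 then
        (st - e.1 + e.2.1) :: extJ fuel (st - e.1) e.2.2
      else [])

def allMovesB (B : ℕ) : List ℕ :=
  (List.range 33).flatMap (fun i => if B / 2 ^ i % 2 = 1 then extJ 33 (B - 2 ^ i) i else [])

def searchB : ℕ → ℕ → Bool
  | 0, B => B == 65536
  | r+1, B => B == 65536 || (decide (pot4m B ≤ 4 * r + 4) && (allMovesB B).any (searchB r))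

theorem cellsL_len : cellsL.length = 33 := by decide

theorem posIn_lt : ∀ c ∈ cellsL, posIn cellsL c < 33 := by decide

theorem getD_posIn : ∀ c ∈ cellsL, cellsL.getD (posIn cellsL c) ((0:ℤ),(0:ℤ)) = c := by decide

theorem shapeOK : ∀ p ∈ board33, ∀ d ∈ dirs8, p + d ∈ board33 → p + d + d ∈ board33 →
    (2 ^ posIn cellsL (p + d), 2 ^ posIn cellsL (p + d + d), posIn cellsL (p + d + d)) ∈
      jtab (posIn cellsL p) := by decide

theorem enc_bit_mem {B : Pos} {c : Cell} (hc : c ∈ cellsL) :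
    enc B / 2 ^ (posIn cellsL c) % 2 = if c ∈ B then 1 else 0 := by
  have h := encL_bit (B := B) cellsL (posIn cellsL c) (by rw [cellsL_len]; exact posIn_lt c hc)
  rwa [getD_posIn c hc] at h

theorem card_board33 : board33.card = 33 := by decide

theorem move_start {B B'' : Pos} {p q : Cell} (h : Move board33 dirs8 B B'' p q) : p ∈ B := by
  cases h with
  | single h => exact h.2.1
  | cons h hm => exact h.2.1

theorem ext_mem {B B'' : Pos} {p q : Cell} (h : Move board33 dirs8 B B'' p q) :
    ∀ fuel, B ⊆ board33 → (B.erase p).card ≤ fuel →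
    enc B'' ∈ extJ fuel (enc (B.erase p)) (posIn cellsL p) := by
  induction h with
  | @single B B' p d h =>
    intro fuel hB hfuel
    obtain ⟨hd, hp, hmid, hlb, hlB, hB'⟩ := h
    have hne : p + d ≠ p := by
      intro hh
      have h1 := congrArg Prod.fst hh
      have h2 := congrArg Prod.snd hh
      simp only [Prod.fst_add, Prod.snd_add] at h1 h2
      exact dirs8_ne0 d hd (Prod.ext (by omega) (by omega))
    have hmid' : p + d ∈ B.erase p := Finset.mem_erase.2 ⟨hne, hmid⟩
    have hmidc : p + d ∈ cellsL := mem_board_cellsL _ (hB hmid)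
    have hlandc : p + d + d ∈ cellsL := mem_board_cellsL _ hlb
    match fuel with
    | 0 =>
      have hpos : 0 < (B.erase p).card := Finset.card_pos.2 ⟨p + d, hmid'⟩
      omega
    | f + 1 =>
      simp only [extJ]
      apply List.mem_flatMap.2
      refine ⟨(2 ^ posIn cellsL (p + d), 2 ^ posIn cellsL (p + d + d), posIn cellsL (p + d + d)),
        shapeOK p (hB hp) d hd (hB hmid) hlb, ?_⟩
      have hbit1 : enc (B.erase p) / 2 ^ posIn cellsL (p + d) % 2 = 1 := by
        rw [enc_bit_mem hmidc, if_pos hmid']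
      have hbit2 : enc (B.erase p) / 2 ^ posIn cellsL (p + d + d) % 2 = 0 := by
        rw [enc_bit_mem hlandc,
          if_neg (fun hh => hlB (Finset.mem_of_mem_erase hh))]
      rw [if_pos ⟨hbit1, hbit2⟩]
      have hsub : enc (B.erase p) - 2 ^ posIn cellsL (p + d)
          = enc ((B.erase p).erase (p + d)) := by
        have := encL_erase hmid' cellsL cellsL_nodup hmidc
        unfold enc; omega
      have hlnotin : p + d + d ∉ (B.erase p).erase (p + d) :=
        fun hh => hlB (Finset.mem_of_mem_erase (Finset.mem_of_mem_erase hh))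
      have hins : enc B' = enc ((B.erase p).erase (p + d)) + 2 ^ posIn cellsL (p + d + d) := by
        rw [hB']
        exact encL_insert hlnotin cellsL cellsL_nodup hlandc
      apply List.mem_cons.2
      left
      rw [hsub, hins]
  | @cons B B' B'' p d q h hm ih =>
    intro fuel hB hfuel
    obtain ⟨hd, hp, hmid, hlb, hlB, hB'⟩ := h
    have hne : p + d ≠ p := by
      intro hh
      have h1 := congrArg Prod.fst hh
      have h2 := congrArg Prod.snd hh
      simp only [Prod.fst_add, Prod.snd_add] at h1 h2
      exact dirs8_ne0 d hd (Prod.ext (by omega) (by omega))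
    have hmid' : p + d ∈ B.erase p := Finset.mem_erase.2 ⟨hne, hmid⟩
    have hmidc : p + d ∈ cellsL := mem_board_cellsL _ (hB hmid)
    have hlandc : p + d + d ∈ cellsL := mem_board_cellsL _ hlb
    match fuel with
    | 0 =>
      have hpos : 0 < (B.erase p).card := Finset.card_pos.2 ⟨p + d, hmid'⟩
      omega
    | f + 1 =>
      simp only [extJ]
      apply List.mem_flatMap.2
      refine ⟨(2 ^ posIn cellsL (p + d), 2 ^ posIn cellsL (p + d + d), posIn cellsL (p + d + d)),
        shapeOK p (hB hp) d hd (hB hmid) hlb, ?_⟩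
      have hbit1 : enc (B.erase p) / 2 ^ posIn cellsL (p + d) % 2 = 1 := by
        rw [enc_bit_mem hmidc, if_pos hmid']
      have hbit2 : enc (B.erase p) / 2 ^ posIn cellsL (p + d + d) % 2 = 0 := by
        rw [enc_bit_mem hlandc,
          if_neg (fun hh => hlB (Finset.mem_of_mem_erase hh))]
      rw [if_pos ⟨hbit1, hbit2⟩]
      have hsub : enc (B.erase p) - 2 ^ posIn cellsL (p + d)
          = enc ((B.erase p).erase (p + d)) := by
        have := encL_erase hmid' cellsL cellsL_nodup hmidc
        unfold enc; omega
      have hlnotin : p + d + d ∉ (B.erase p).erase (p + d) :=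
        fun hh => hlB (Finset.mem_of_mem_erase (Finset.mem_of_mem_erase hh))
      apply List.mem_cons.2
      right
      have herase : B'.erase (p + d + d) = (B.erase p).erase (p + d) := by
        rw [hB', Finset.erase_insert hlnotin]
      have hB'sub : B' ⊆ board33 := by
        rw [hB']
        intro c hc
        rcases Finset.mem_insert.1 hc with hh | hh
        · exact hh ▸ hlb
        · exact hB (Finset.mem_of_mem_erase (Finset.mem_of_mem_erase hh))
      have hcard : (B'.erase (p + d + d)).card ≤ f := by
        rw [herase, Finset.card_erase_of_mem hmid']
        omega
      have := ih f hB'sub hcard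
      rw [herase, ← hsub] at this
      exact this

theorem move_mem {B B'' : Pos} {p q : Cell} (h : Move board33 dirs8 B B'' p q)
    (hB : B ⊆ board33) : enc B'' ∈ allMovesB (enc B) := by
  have hp : p ∈ B := move_start h
  have hpc : p ∈ cellsL := mem_board_cellsL _ (hB hp)
  unfold allMovesB
  apply List.mem_flatMap.2
  refine ⟨posIn cellsL p, List.mem_range.2 (posIn_lt p hpc), ?_⟩
  have hbit : enc B / 2 ^ posIn cellsL p % 2 = 1 := by
    rw [enc_bit_mem hpc, if_pos hp]
  rw [if_pos hbit]
  have hsub : enc B - 2 ^ posIn cellsL p = enc (B.erase p) := by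
    have := encL_erase hp cellsL cellsL_nodup hpc
    unfold enc; omega
  rw [hsub]
  apply ext_mem h 33 hB
  have h1 : B.card ≤ 33 := card_board33 ▸ Finset.card_le_card hB
  have h2 : (B.erase p).card = B.card - 1 := Finset.card_erase_of_mem hp
  omega

theorem pot_final : pot ({((0:ℤ),(0:ℤ))} : Pos) = 0 := by
  rw [pot, Finset.sum_singleton]
  decide

theorem enc_final : enc ({((0:ℤ),(0:ℤ))} : Pos) = 65536 := by decide

theorem main_search {B T : Pos} {l : List (Cell × Cell)}
    (hs : MoveSeq board33 dirs8 B T l) :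
    T = {((0:ℤ),(0:ℤ))} → ∀ n, B ⊆ board33 → l.length ≤ n → searchB n (enc B) = true := by
  induction hs with
  | nil B =>
    intro hT n _ _
    rw [hT, enc_final]
    match n with
    | 0 => rfl
    | m + 1 => simp [searchB]
  | @cons B B' B'' p q l h hs ih =>
    intro hT n hB hlen
    match n with
    | 0 => simp at hlen
    | m + 1 =>
      simp only [searchB, Bool.or_eq_true, Bool.and_eq_true]
      right
      constructor
      · apply decide_eq_true
        have hseq := seq_pot (MoveSeq.cons h hs) hB
        rw [hT, pot_final] at hseq
        have := hseq.1
        rw [pot4m_enc hB]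
        simp only [List.length_cons] at this hlen
        omega
      · apply List.any_eq_true.2
        have hB' : B' ⊆ board33 := (move_pot h hB).2
        refine ⟨enc B', move_mem h hB, ih hT m hB' ?_⟩
        simp only [List.length_cons] at hlen
        omega

set_option maxRecDepth 10000 in
theorem search13 : searchB 13 8589869055 = false := by decide

theorem enc_init : enc (board33.erase ((0:ℤ),(0:ℤ))) = 8589869055 := by decide

/-- on the standard 33-hole board under 8-move solitaire, no solution of the
central game has fewer than 14 moves. -/
theorem stmt_17 (l : List (Cell × Cell))
    (h : MoveSeq board33 dirs8 (board33.erase (0, 0)) {((0 : ℤ), (0 : ℤ))} l) :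
    14 ≤ l.length := by
  by_contra hlt
  push_neg at hlt
  have h1 : board33.erase ((0:ℤ),(0:ℤ)) ⊆ board33 := Finset.erase_subset _ _
  have h2 := main_search h rfl 13 h1 (by omega)
  rw [enc_init] at h2
  rw [search13] at h2
  exact Bool.false_ne_true h2
end
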